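/- Let D be a contractive distance on two-qubit density matrices. Let c1, c3 ∈ [-1,1] and let z be a real number with c3 + z ∈ [-1,1]. Then D(ρ(c1,-c1·c3,c3), ρ(0,0,c3)) ≤ D(ρ(c1,-c1·c3,c3), ρ(0,0,c3+z)). That is, among BD classical states on the c3-axis, the closest one to the freezing-surface state ρ(c1,-c1·c3,c3) is its orthogonal projection ρ(0,0,c3). -/

import Mathlib

open Matrix Kronecker
open scoped ComplexOrder

noncomputable section

/-- 2×2 complex matrices (single-qubit operators). -/
abbrev Mat2 := Matrix (Fin 2) (Fin 2) ℂ

/-- 4×4 complex matrices (two-qubit operators), indexed by `Fin 2 × Fin 2`. -/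
abbrev Mat4 := Matrix (Fin 2 × Fin 2) (Fin 2 × Fin 2) ℂ

/-- Pauli matrix σ₁ (x). -/
def σ1 : Mat2 := !![0, 1; 1, 0]

/-- Pauli matrix σ₂ (y). -/
def σ2 : Mat2 := !![0, -Complex.I; Complex.I, 0]

/-- Pauli matrix σ₃ (z). -/
def σ3 : Mat2 := !![1, 0; 0, -1]

/-- The Bell-diagonal state ρ(c1,c2,c3) = (1/4)(I₄ + c1 σ₁⊗σ₁ + c2 σ₂⊗σ₂ + c3 σ₃⊗σ₃). -/
def BD (c1 c2 c3 : ℝ) : Mat4 :=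
  (1 / 4 : ℂ) • ((1 : Mat4) + (c1 : ℂ) • (σ1 ⊗ₖ σ1) + (c2 : ℂ) • (σ2 ⊗ₖ σ2)
    + (c3 : ℂ) • (σ3 ⊗ₖ σ3))

/-- A two-qubit density matrix: positive semidefinite with unit trace. -/
def IsDensityMatrix (ρ : Mat4) : Prop := ρ.PosSemidef ∧ ρ.trace = 1

/-- A CPTP map given by finitely many Kraus operators. -/
def IsCPTP (Λ : Mat4 → Mat4) : Prop :=
  ∃ (n : ℕ) (K : Fin n → Mat4),
    (∑ i, (K i)ᴴ * K i) = 1 ∧ ∀ X, Λ X = ∑ i, K i * X * (K i)ᴴ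

/-- A distance `D` is contractive if it contracts under every CPTP map. -/
def Contractive (D : Mat4 → Mat4 → ℝ) : Prop :=
  ∀ Λ : Mat4 → Mat4, IsCPTP Λ → ∀ ρ σ : Mat4,
    IsDensityMatrix ρ → IsDensityMatrix σ → D (Λ ρ) (Λ σ) ≤ D ρ σ

/-- A distance `D` is invariant under transposition. -/
def TransposeInvariant (D : Mat4 → Mat4 → ℝ) : Prop :=
  ∀ ρ σ : Mat4, IsDensityMatrix ρ → IsDensityMatrix σ → D ρᵀ σᵀ = D ρ σ

/-- A distance `D` is jointly convex. -/
def JointlyConvex (D : Mat4 → Mat4 → ℝ) : Prop :=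
  ∀ q : ℝ, 0 ≤ q → q ≤ 1 → ∀ ρ σ τ ς : Mat4,
    IsDensityMatrix ρ → IsDensityMatrix σ → IsDensityMatrix τ → IsDensityMatrix ς →
    D (q • ρ + (1 - q) • σ) (q • τ + (1 - q) • ς) ≤ q * D ρ τ + (1 - q) * D σ ς

/-- A classical-classical two-qubit state: ∑ᵢⱼ pᵢⱼ |aᵢ⟩⟨aᵢ| ⊗ |bⱼ⟩⟨bⱼ| with (pᵢⱼ) a
probability distribution and {aᵢ}, {bⱼ} orthonormal bases of ℂ². -/
def IsClassical (χ : Mat4) : Prop :=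
  ∃ (p : Fin 2 → Fin 2 → ℝ) (a b : Fin 2 → Fin 2 → ℂ),
    (∀ i j, 0 ≤ p i j) ∧ (∑ i, ∑ j, p i j = 1) ∧
    (∀ i i', ∑ k, (starRingEnd ℂ) (a i k) * a i' k = if i = i' then 1 else 0) ∧
    (∀ j j', ∑ k, (starRingEnd ℂ) (b j k) * b j' k = if j = j' then 1 else 0) ∧
    χ = ∑ i, ∑ j, (p i j : ℂ) •
      (Matrix.vecMulVec (a i) (star (a i)) ⊗ₖ Matrix.vecMulVec (b j) (star (b j)))

/-- Membership in the tetrahedron of Bell-diagonal states. -/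
def InTetra (c : ℝ × ℝ × ℝ) : Prop :=
  c ∈ convexHull ℝ
    ({((1 : ℝ), (-1 : ℝ), (1 : ℝ)), ((-1 : ℝ), (1 : ℝ), (1 : ℝ)),
      ((1 : ℝ), (1 : ℝ), (-1 : ℝ)), ((-1 : ℝ), (-1 : ℝ), (-1 : ℝ))} : Set (ℝ × ℝ × ℝ))

/-- Geometric discord: distance to the set of classical states. -/
def QD (D : Mat4 → Mat4 → ℝ) (ρ : Mat4) : ℝ :=
  sInf {x : ℝ | ∃ χ : Mat4, IsClassical χ ∧ x = D ρ χ}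

/-- The Pauli matrices, indexed. -/
def pauli : Fin 3 → Mat2 := ![σ1, σ2, σ3]

namespace AuxClosest

/-- explicit 4×4 matrix from nested vectors. -/
def M4 (v : Fin 2 → Fin 2 → Fin 2 → Fin 2 → ℂ) : Mat4 :=
  Matrix.of fun p q => v p.1 p.2 q.1 q.2

def BDmat (c1 c2 c3 : ℝ) : Mat4 := M4
  ![![![![((1+c3)/4 : ℂ), 0], ![0, (c1-c2)/4]], ![![0, (1-c3)/4], ![(c1+c2)/4, 0]]],
    ![![![0, (c1+c2)/4], ![(1-c3)/4, 0]], ![![(c1-c2)/4, 0], ![0, (1+c3)/4]]]]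

set_option maxHeartbeats 1000000 in
theorem BD_eq (c1 c2 c3 : ℝ) : BD c1 c2 c3 = BDmat c1 c2 c3 := by
  ext ⟨i,k⟩ ⟨j,l⟩
  fin_cases i <;> fin_cases k <;> fin_cases j <;> fin_cases l <;>
    simp [BD, BDmat, M4, σ1, σ2, σ3, Matrix.one_apply, kroneckerMap_apply, Prod.ext_iff] <;>
    ring

/-- the (unnormalized) Bell vectors -/
def u : Fin 4 → (Fin 2 × Fin 2 → ℂ) :=
  ![fun p => (![![1,0],![0,1]] : Fin 2 → Fin 2 → ℂ) p.1 p.2,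
    fun p => (![![1,0],![0,-1]] : Fin 2 → Fin 2 → ℂ) p.1 p.2,
    fun p => (![![0,1],![1,0]] : Fin 2 → Fin 2 → ℂ) p.1 p.2,
    fun p => (![![0,1],![-1,0]] : Fin 2 → Fin 2 → ℂ) p.1 p.2]

lemma psd_outer (v : Fin 2 × Fin 2 → ℂ) : (vecMulVec v (star v)).PosSemidef := by
  rw [vecMulVec_eq Unit, ← conjTranspose_replicateCol]
  exact posSemidef_self_mul_conjTranspose _

lemma psd_smul {M : Mat4} (h : M.PosSemidef) {r : ℝ} (hr : 0 ≤ r) :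
    ((r : ℂ) • M).PosSemidef := by
  constructor
  · unfold Matrix.IsHermitian
    rw [conjTranspose_smul, h.1]
    congr 1
    simp
  · intro x
    exact (h.smul (show (0:ℂ) ≤ (r:ℂ) by exact_mod_cast hr)).2 x

set_option maxHeartbeats 1000000 in
lemma BD_decomp (c1 c2 c3 : ℝ) : BD c1 c2 c3 =
    (((1+c1-c2+c3)/8 : ℝ) : ℂ) • vecMulVec (u 0) (star (u 0)) +
    (((1-c1+c2+c3)/8 : ℝ) : ℂ) • vecMulVec (u 1) (star (u 1)) +
    (((1+c1+c2-c3)/8 : ℝ) : ℂ) • vecMulVec (u 2) (star (u 2)) +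
    (((1-c1-c2-c3)/8 : ℝ) : ℂ) • vecMulVec (u 3) (star (u 3)) := by
  rw [BD_eq]
  ext ⟨i,k⟩ ⟨j,l⟩
  fin_cases i <;> fin_cases k <;> fin_cases j <;> fin_cases l <;>
    simp [BDmat, M4, u, vecMulVec_apply] <;> ring

lemma BD_psd (c1 c2 c3 : ℝ) (h0 : 0 ≤ 1+c1-c2+c3) (h1 : 0 ≤ 1-c1+c2+c3)
    (h2 : 0 ≤ 1+c1+c2-c3) (h3 : 0 ≤ 1-c1-c2-c3) : (BD c1 c2 c3).PosSemidef := by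
  rw [BD_decomp]
  exact (((psd_smul (psd_outer _) (by linarith)).add
          (psd_smul (psd_outer _) (by linarith))).add
          (psd_smul (psd_outer _) (by linarith))).add
          (psd_smul (psd_outer _) (by linarith))

lemma BD_trace (c1 c2 c3 : ℝ) : (BD c1 c2 c3).trace = 1 := by
  rw [BD_eq]
  simp [Matrix.trace, BDmat, M4, Fintype.sum_prod_type, Fin.sum_univ_succ, Matrix.diag]
  ring

/-- Kraus patterns: P0 = P_Φ, P1 = (1⊗σ1)P_Ψ, P2 = P_Ψ, P3 = (1⊗σ1)P_Φ. -/
def P : Fin 4 → Mat4 :=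
  ![M4 ![![![![1,0],![0,0]], ![![0,0],![0,0]]], ![![![0,0],![0,0]], ![![0,0],![0,1]]]],
    M4 ![![![![0,1],![0,0]], ![![0,0],![0,0]]], ![![![0,0],![0,0]], ![![0,0],![1,0]]]],
    M4 ![![![![0,0],![0,0]], ![![0,1],![0,0]]], ![![![0,0],![1,0]], ![![0,0],![0,0]]]],
    M4 ![![![![0,0],![0,0]], ![![1,0],![0,0]]], ![![![0,0],![0,1]], ![![0,0],![0,0]]]]]

def w (c3 : ℝ) : Fin 4 → ℝ := ![(1+c3)/2, (1+c3)/2, (1-c3)/2, (1-c3)/2]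

def K (c3 : ℝ) (i : Fin 4) : Mat4 := (Real.sqrt (w c3 i) : ℂ) • P i

lemma w_nonneg {c3 : ℝ} (h : c3 ∈ Set.Icc (-1:ℝ) 1) (i : Fin 4) : 0 ≤ w c3 i := by
  obtain ⟨h1, h2⟩ := h
  fin_cases i <;> simp [w] <;> linarith

lemma K_sandwich {c3 : ℝ} (h : c3 ∈ Set.Icc (-1:ℝ) 1) (i : Fin 4) (X : Mat4) :
    K c3 i * X * (K c3 i)ᴴ = (w c3 i : ℂ) • (P i * X * (P i)ᴴ) := by
  have hs : (Real.sqrt (w c3 i) : ℂ) * (Real.sqrt (w c3 i) : ℂ) = (w c3 i : ℂ) := by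
    rw [← Complex.ofReal_mul, Real.mul_self_sqrt (w_nonneg h i)]
  rw [K, conjTranspose_smul, smul_mul_assoc, smul_mul_assoc, mul_smul_comm, smul_smul,
    Complex.star_def, Complex.conj_ofReal, hs]

set_option maxHeartbeats 4000000 in
lemma K_comp {c3 : ℝ} (h : c3 ∈ Set.Icc (-1:ℝ) 1) :
    (∑ i, (K c3 i)ᴴ * K c3 i) = 1 := by
  have step : ∀ i, (K c3 i)ᴴ * K c3 i = (w c3 i : ℂ) • ((P i)ᴴ * P i) := by
    intro i
    have hs : (Real.sqrt (w c3 i) : ℂ) * (Real.sqrt (w c3 i) : ℂ) = (w c3 i : ℂ) := by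
      rw [← Complex.ofReal_mul, Real.mul_self_sqrt (w_nonneg h i)]
    rw [K, conjTranspose_smul, smul_mul_assoc, mul_smul_comm, smul_smul,
      Complex.star_def, Complex.conj_ofReal, hs]
  simp only [step]
  ext ⟨i,k⟩ ⟨j,l⟩
  fin_cases i <;> fin_cases k <;> fin_cases j <;> fin_cases l <;>
    simp [Fin.sum_univ_succ, w, P, M4, Matrix.mul_apply, Fintype.sum_prod_type,
      Matrix.one_apply, Prod.ext_iff] <;> ring

set_option maxHeartbeats 4000000 in
lemma K_fix {c1 c3 : ℝ} (h : c3 ∈ Set.Icc (-1:ℝ) 1) :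
    (∑ i, K c3 i * BD c1 (-(c1*c3)) c3 * (K c3 i)ᴴ) = BD c1 (-(c1*c3)) c3 := by
  simp only [K_sandwich h]
  rw [BD_eq]
  ext ⟨i,k⟩ ⟨j,l⟩
  fin_cases i <;> fin_cases k <;> fin_cases j <;> fin_cases l <;>
    simp [Fin.sum_univ_succ, w, P, M4, BDmat, Matrix.mul_apply, Fintype.sum_prod_type] <;>
    ring

set_option maxHeartbeats 4000000 in
lemma K_proj {c3 : ℝ} (s : ℝ) (h : c3 ∈ Set.Icc (-1:ℝ) 1) :
    (∑ i, K c3 i * BD 0 0 s * (K c3 i)ᴴ) = BD 0 0 c3 := by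
  simp only [K_sandwich h]
  rw [BD_eq, BD_eq]
  ext ⟨i,k⟩ ⟨j,l⟩
  fin_cases i <;> fin_cases k <;> fin_cases j <;> fin_cases l <;>
    simp [Fin.sum_univ_succ, w, P, M4, BDmat, Matrix.mul_apply, Fintype.sum_prod_type] <;>
    ring

end AuxClosest

/-- among BD classical states on the c3-axis, the closest one to
ρ(c1,-c1·c3,c3) is its orthogonal projection ρ(0,0,c3). -/
theorem closest_on_c3_axis_is_projection
    (D : Mat4 → Mat4 → ℝ) (hD : Contractive D)
    (c1 c3 z : ℝ) (hc1 : c1 ∈ Set.Icc (-1 : ℝ) 1) (hc3 : c3 ∈ Set.Icc (-1 : ℝ) 1)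
    (hz : c3 + z ∈ Set.Icc (-1 : ℝ) 1) :
    D (BD c1 (-(c1 * c3)) c3) (BD 0 0 c3)
      ≤ D (BD c1 (-(c1 * c3)) c3) (BD 0 0 (c3 + z)) := by
  have ha1 := hc1.1; have ha2 := hc1.2
  have hb1 := hc3.1; have hb2 := hc3.2
  have hd1 := hz.1; have hd2 := hz.2
  have hρ : IsDensityMatrix (BD c1 (-(c1 * c3)) c3) := by
    refine ⟨AuxClosest.BD_psd _ _ _ ?_ ?_ ?_ ?_, AuxClosest.BD_trace _ _ _⟩ <;> nlinarith
  have hσ : IsDensityMatrix (BD 0 0 (c3 + z)) := by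
    refine ⟨AuxClosest.BD_psd _ _ _ ?_ ?_ ?_ ?_, AuxClosest.BD_trace _ _ _⟩ <;> nlinarith
  have hΛ : IsCPTP (fun X => ∑ i, AuxClosest.K c3 i * X * (AuxClosest.K c3 i)ᴴ) :=
    ⟨4, AuxClosest.K c3, AuxClosest.K_comp hc3, fun X => rfl⟩
  have := hD _ hΛ _ _ hρ hσ
  rwa [AuxClosest.K_fix hc3, AuxClosest.K_proj (c3 + z) hc3] at this
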